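/- Let n = 2m and let H_α be the Hermitian adjacency matrix of an oriented n-cycle with weights satisfying Σ_j α(j) = π. Then for every vertex a and every time t ∈ ℝ, the (a+m, a) entry of the matrix exponential exp(i·t·H_α) is zero. In particular, the probability of transfer between antipodal vertices is zero for all times. -/

import Mathlib

/-- The Hermitian adjacency matrix of an oriented `n`-cycle. -/
noncomputable def cycleH (n : ℕ) (α : Fin n → ℝ) : Matrix (Fin n) (Fin n) ℂ :=
  fun j k =>
    (if (k : ℕ) = ((j : ℕ) + 1) % n then Complex.exp (Complex.I * (α j)) else 0) +
    (if (j : ℕ) = ((k : ℕ) + 1) % n then Complex.exp (-(Complex.I * (α k))) else 0)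

namespace ZeroTransferAux

open Fin.CommRing

/-- The gauge phase attached to vertex `j` for the reflection through `a`. -/
noncomputable def gp (n : ℕ) [NeZero n] (α : Fin n → ℝ) (a j : Fin n) : ℂ :=
  Complex.exp (-Complex.I * ((∑ i ∈ Finset.range ((j - a : Fin n) : ℕ),
      (α (a + (i : Fin n)) + α (a - 1 - (i : Fin n)))) : ℝ))

/-- The gauged reflection matrix. -/
noncomputable def refU (n : ℕ) [NeZero n] (α : Fin n → ℝ) (a : Fin n) :
    Matrix (Fin n) (Fin n) ℂ :=
  fun j k => if k = a + a - j then gp n α a j else 0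

lemma sum1 (n : ℕ) [NeZero n] (α : Fin n → ℝ) (a : Fin n) :
    ∑ i ∈ Finset.range n, α (a + (i : Fin n)) = ∑ j, α j := by
  rw [← Fin.sum_univ_eq_sum_range (fun i : ℕ => α (a + (i : Fin n))) n]
  simp only [Fin.cast_val_eq_self]
  exact Fintype.sum_equiv (Equiv.addLeft a) _ _ (fun i => rfl)

lemma sum2 (n : ℕ) [NeZero n] (α : Fin n → ℝ) (a : Fin n) :
    ∑ i ∈ Finset.range n, α (a - 1 - (i : Fin n)) = ∑ j, α j := by
  rw [← Fin.sum_univ_eq_sum_range (fun i : ℕ => α (a - 1 - (i : Fin n))) n]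
  simp only [Fin.cast_val_eq_self]
  exact Fintype.sum_equiv (Equiv.subLeft (a - 1)) _ _ (fun i => rfl)

lemma exp_neg_two_pi : Complex.exp (-Complex.I * ((2 * Real.pi : ℝ) : ℂ)) = 1 := by
  have h := Complex.exp_int_mul_two_pi_mul_I (-1)
  rw [show ((-1 : ℤ) : ℂ) * (2 * Real.pi * Complex.I)
      = -Complex.I * ((2 * Real.pi : ℝ) : ℂ) by push_cast; ring] at h
  exact h

lemma gp_succ (n : ℕ) [NeZero n] (hn : 1 < n) (α : Fin n → ℝ)
    (hα : ∑ j, α j = Real.pi) (a j : Fin n) :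
    gp n α a (j + 1) = gp n α a j *
      Complex.exp (-Complex.I * ((α j + α (a + a - (j + 1)) : ℝ) : ℂ)) := by
  have h1 : ((1 : Fin n) : ℕ) = 1 := by
    rw [Fin.val_one']; exact Nat.mod_eq_of_lt hn
  set d : ℕ := ((j - a : Fin n) : ℕ) with hd
  have hdcast : ((d : ℕ) : Fin n) = j - a := by rw [hd]; exact Fin.cast_val_eq_self _
  have hdlt : d < n := (j - a).isLt
  have hval : ((j + 1 - a : Fin n) : ℕ) = (d + 1) % n := by
    have e : (j + 1 - a : Fin n) = (j - a) + 1 := by ring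
    rw [e, Fin.add_def, h1]
  have hterm1 : a + ((d : ℕ) : Fin n) = j := by rw [hdcast]; ring
  have hterm2 : a - 1 - ((d : ℕ) : Fin n) = a + a - (j + 1) := by rw [hdcast]; ring
  by_cases hc : d + 1 < n
  · unfold gp
    rw [hval, Nat.mod_eq_of_lt hc, Finset.sum_range_succ, hterm1, hterm2,
      ← Complex.exp_add]
    congr 1
    push_cast
    ring
  · have hEq : d + 1 = n := by omega
    have hzero : ((j + 1 - a : Fin n) : ℕ) = 0 := by rw [hval, hEq, Nat.mod_self]
    have hfull : ∑ i ∈ Finset.range n,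
        (α (a + (i : Fin n)) + α (a - 1 - (i : Fin n))) = 2 * Real.pi := by
      rw [Finset.sum_add_distrib, sum1, sum2, hα]; ring
    have hrange : Finset.range n = Finset.range (d + 1) := by rw [hEq]
    rw [hrange, Finset.sum_range_succ, hterm1, hterm2] at hfull
    have hlhs : gp n α a (j + 1) = 1 := by
      unfold gp
      rw [hzero]
      simp
    have hrhs : gp n α a j *
        Complex.exp (-Complex.I * ((α j + α (a + a - (j + 1)) : ℝ) : ℂ)) = 1 := by
      unfold gp
      rw [← Complex.exp_add]
      rw [show -Complex.I * ((∑ i ∈ Finset.range d,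
            (α (a + (i : Fin n)) + α (a - 1 - (i : Fin n))) : ℝ) : ℂ)
          + -Complex.I * ((α j + α (a + a - (j + 1)) : ℝ) : ℂ)
          = -Complex.I * (((∑ i ∈ Finset.range d,
            (α (a + (i : Fin n)) + α (a - 1 - (i : Fin n)))
            + (α j + α (a + a - (j + 1))) : ℝ)) : ℂ) by push_cast; ring, hfull]
      exact exp_neg_two_pi
    rw [hlhs, hrhs]

lemma cycleH_apply (n : ℕ) [NeZero n] (hn : 1 < n) (α : Fin n → ℝ) (j k : Fin n) :
    cycleH n α j k = (if k = j + 1 then Complex.exp (Complex.I * (α j)) else 0) +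
      (if j = k + 1 then Complex.exp (-(Complex.I * (α k))) else 0) := by
  have h1 : ((1 : Fin n) : ℕ) = 1 := by
    rw [Fin.val_one']; exact Nat.mod_eq_of_lt hn
  have key : ∀ p q : Fin n, ((q : ℕ) = ((p : ℕ) + 1) % n) ↔ (q = p + 1) := by
    intro p q
    rw [Fin.ext_iff, Fin.add_def, h1]
  unfold cycleH
  rw [if_congr (key j k) rfl rfl, if_congr (key k j) rfl rfl]

lemma key_identity (n : ℕ) [NeZero n] (hn : 2 < n) (α : Fin n → ℝ)
    (hα : ∑ j, α j = Real.pi) (a : Fin n) (j c : Fin n) :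
    gp n α a j * cycleH n α (a + a - j) (a + a - c)
      = cycleH n α j c * gp n α a c := by
  have hn1 : 1 < n := by omega
  rw [cycleH_apply n hn1, cycleH_apply n hn1]
  have h2 : ((2 : Fin n) : ℕ) = 2 := by
    have : ((2 : ℕ) : Fin n) = (2 : Fin n) := by push_cast; ring
    rw [← this, Fin.val_natCast]
    exact Nat.mod_eq_of_lt hn
  have iff1 : (a + a - c = a + a - j + 1) ↔ (j = c + 1) := by
    constructor <;> intro h <;> linear_combination h
  have iff2 : (a + a - j = a + a - c + 1) ↔ (c = j + 1) := by
    constructor <;> intro h <;> linear_combination h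
  rw [if_congr iff1 rfl rfl, if_congr iff2 rfl rfl]
  by_cases hjc : j = c + 1
  · by_cases hcj : c = j + 1
    · exfalso
      have h20 : (2 : Fin n) = 0 := by
        have := hjc
        rw [hcj] at this
        linear_combination -this
      have := congrArg Fin.val h20
      rw [h2] at this
      simp at this
    · rw [if_pos hjc, if_neg hcj, if_pos hjc, if_neg hcj]
      subst hjc
      have hexp : Complex.exp (-Complex.I * ((α c + α (a + a - (c + 1)) : ℝ) : ℂ)) *
          Complex.exp (Complex.I * ((α (a + a - (c + 1)) : ℝ) : ℂ))
          = Complex.exp (-(Complex.I * ((α c : ℝ) : ℂ))) := by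
        rw [← Complex.exp_add]; congr 1; push_cast; ring
      rw [gp_succ n hn1 α hα a c, zero_add, add_zero, mul_assoc, hexp]
      exact mul_comm _ _
  · by_cases hcj : c = j + 1
    · rw [if_pos hcj, if_neg hjc, if_pos hcj, if_neg hjc]
      subst hcj
      rw [gp_succ n hn1 α hα a j, zero_add, add_zero, ← mul_assoc,
        mul_comm (Complex.exp (Complex.I * ((α j : ℝ) : ℂ))) (gp n α a j),
        mul_assoc, ← Complex.exp_add]
      congr 1
      push_cast
      ring
    · simp [hjc, hcj]

lemma comm_HU (n : ℕ) [NeZero n] (hn : 2 < n) (α : Fin n → ℝ)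
    (hα : ∑ j, α j = Real.pi) (a : Fin n) :
    cycleH n α * refU n α a = refU n α a * cycleH n α := by
  ext j k
  have hiff : ∀ p : Fin n, (k = a + a - p) ↔ (p = a + a - k) := by
    intro p; constructor <;> intro h <;> linear_combination h
  rw [Matrix.mul_apply, Matrix.mul_apply]
  have hL : ∑ p, cycleH n α j p * refU n α a p k
      = cycleH n α j (a + a - k) * gp n α a (a + a - k) := by
    unfold refU
    simp only [hiff]
    simp [mul_ite, mul_zero]
  have hR : ∑ p, refU n α a j p * cycleH n α p k
      = gp n α a j * cycleH n α (a + a - j) k := by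
    unfold refU
    simp [ite_mul, zero_mul]
  rw [hL, hR]
  have := key_identity n hn α hα a j (a + a - k)
  rw [show a + a - (a + a - k) = k by ring] at this
  rw [this]

lemma gp_self (n : ℕ) [NeZero n] (α : Fin n → ℝ) (a : Fin n) : gp n α a a = 1 := by
  unfold gp
  rw [show (a - a : Fin n) = 0 by ring]
  simp

end ZeroTransferAux

open ZeroTransferAux Fin.CommRing in
/-- **Zero transfer between antipodal vertices.** If the weights of an oriented even
cycle `C_{2m}` satisfy `∑ α j = π`, then for every vertex `a` and every time `t`, the
`(a + m, a)` entry of the transition matrix `exp(i t H_α)` vanishes: the probability of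
transfer between antipodal vertices is zero at all times. -/
theorem zero_transfer_oriented_even_cycle (m : ℕ) (hm : 2 ≤ m)
    (α : Fin (2 * m) → ℝ) (hα : ∑ j, α j = Real.pi)
    (a : Fin (2 * m)) (t : ℝ) :
    NormedSpace.exp ((Complex.I * t) • cycleH (2 * m) α)
      (⟨((a : ℕ) + m) % (2 * m), Nat.mod_lt _ (by omega)⟩) a = 0 := by
  haveI : NeZero (2 * m) := ⟨by omega⟩
  have hn2 : 2 < 2 * m := by omega
  have hmcast : (((m : ℕ) : Fin (2 * m)) : ℕ) = m := by
    rw [Fin.val_natCast]; exact Nat.mod_eq_of_lt (by omega)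
  set b : Fin (2 * m) := a + ((m : ℕ) : Fin (2 * m)) with hbdef
  have hbeq : (⟨((a : ℕ) + m) % (2 * m), Nat.mod_lt _ (by omega)⟩ : Fin (2 * m)) = b := by
    apply Fin.ext
    simp [hbdef, Fin.add_def, hmcast]
  rw [hbeq]
  -- key facts
  have hmm : ((m : ℕ) : Fin (2 * m)) + ((m : ℕ) : Fin (2 * m)) = 0 := by
    rw [← Nat.cast_add]
    rw [show m + m = 2 * m by omega]
    exact Fin.natCast_self (2 * m)
  have hbfix : a + a - b = b := by
    rw [hbdef]; linear_combination -hmm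
  have hbval : ((b - a : Fin (2 * m)) : ℕ) = m := by
    rw [show b - a = ((m : ℕ) : Fin (2 * m)) by rw [hbdef]; ring, hmcast]
  -- gp at b is -1
  have hgpb : gp (2 * m) α a b = -1 := by
    unfold gp
    rw [hbval]
    have hsplit : ∑ i ∈ Finset.range (m + m),
          α (a + ((m : ℕ) : Fin (2 * m)) + (i : Fin (2 * m)))
        = ∑ i ∈ Finset.range m, α (a + ((m : ℕ) : Fin (2 * m)) + (i : Fin (2 * m)))
          + ∑ i ∈ Finset.range m,
              α (a + ((m : ℕ) : Fin (2 * m)) + ((m + i : ℕ) : Fin (2 * m))) :=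
      Finset.sum_range_add _ m m
    have hrefl : ∑ i ∈ Finset.range m, α (a - 1 - (i : Fin (2 * m)))
        = ∑ i ∈ Finset.range m, α (a + ((m : ℕ) : Fin (2 * m)) + (i : Fin (2 * m))) := by
      rw [← Finset.sum_range_reflect
        (fun i : ℕ => α (a + ((m : ℕ) : Fin (2 * m)) + (i : Fin (2 * m)))) m]
      apply Finset.sum_congr rfl
      intro i hi
      have him : i < m := Finset.mem_range.mp hi
      congr 1
      have hc : ((m - 1 - i : ℕ) : Fin (2 * m)) + ((1 + i : ℕ) : Fin (2 * m))
          = ((m : ℕ) : Fin (2 * m)) := by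
        rw [← Nat.cast_add]
        congr 1
        omega
      push_cast at hc ⊢
      linear_combination -hc - hmm
    have hsum : ∑ i ∈ Finset.range m,
        (α (a + (i : Fin (2 * m))) + α (a - 1 - (i : Fin (2 * m)))) = Real.pi := by
      rw [Finset.sum_add_distrib, hrefl]
      have h2 : ∑ i ∈ Finset.range m,
          α (a + ((m : ℕ) : Fin (2 * m)) + ((m + i : ℕ) : Fin (2 * m)))
          = ∑ i ∈ Finset.range m, α (a + (i : Fin (2 * m))) := by
        apply Finset.sum_congr rfl
        intro i _
        congr 1
        push_cast
        linear_combination hmm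
      have hfull := sum1 (2 * m) α (a + ((m : ℕ) : Fin (2 * m)))
      rw [show Finset.range (2 * m) = Finset.range (m + m) from by rw [two_mul]] at hfull
      rw [hsplit, h2] at hfull
      rw [add_comm, hfull, hα]
    rw [hsum]
    rw [show -Complex.I * ((Real.pi : ℝ) : ℂ) = -(Real.pi * Complex.I) by push_cast; ring]
    rw [Complex.exp_neg, Complex.exp_pi_mul_I]
    norm_num
  -- commutation
  have hcomm : Commute ((Complex.I * t) • cycleH (2 * m) α) (refU (2 * m) α a) := by
    unfold Commute SemiconjBy
    rw [Matrix.smul_mul, Matrix.mul_smul, comm_HU (2 * m) hn2 α hα a]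
  have hE := (hcomm.exp_left).eq
  set E := NormedSpace.exp ((Complex.I * t) • cycleH (2 * m) α) with hEdef
  have hentry := congrFun (congrFun hE b) a
  have hL : (E * refU (2 * m) α a) b a = E b a * gp (2 * m) α a a := by
    rw [Matrix.mul_apply]
    have hiff : ∀ p : Fin (2 * m), (a = a + a - p) ↔ (p = a) := by
      intro p; constructor <;> intro h <;> linear_combination h
    unfold refU
    simp only [hiff]
    simp [mul_ite, mul_zero]
  have hR : (refU (2 * m) α a * E) b a = gp (2 * m) α a b * E (a + a - b) a := by
    rw [Matrix.mul_apply]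
    unfold refU
    simp [ite_mul, zero_mul]
  rw [hL, hR, gp_self, hgpb, hbfix, mul_one] at hentry
  have h2E : (2 : ℂ) * E b a = 0 := by linear_combination hentry
  have h2 : (2 : ℂ) ≠ 0 := by norm_num
  exact (mul_eq_zero.mp h2E).resolve_left h2
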